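/- Let G = S_k and x ≼ y in B_{1_{S_k}}(k,n), i.e., x, y are weakly increasing tuples in [n]^k with x_i ≤ y_i for all i. Set w = (Σ_{i=x_1}^{y_1} e_i) ⊗ … ⊗ (Σ_{i=x_k}^{y_k} e_i). Then the support of P_{1_{S_k}}(w) in the basis {P_{1_{S_k}}(e_z) : z weakly increasing} is exactly the interval [x,y] = {z weakly increasing : x ≼ z ≼ y}, where z ≼ z' iff z ≤ g(z') for some g ∈ S_k. -/

import Mathlib

lemma aux17 {k : ℕ} {α : Type*} [LinearOrder α] {a b : Fin k → α}
    (ha : Monotone a) (hb : Monotone b) (g : Equiv.Perm (Fin k))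
    (h : ∀ i, a i ≤ b (g i)) : ∀ i, a i ≤ b i := by
  intro i
  obtain ⟨j, hij, hgj⟩ : ∃ j, i ≤ j ∧ g j ≤ i := by
    by_contra hc
    push_neg at hc
    have hcard : (Finset.Ici i).card ≤ (Finset.Ioi i).card := by
      apply Finset.card_le_card_of_injOn g
      · intro j hj
        simp only [Finset.mem_coe, Finset.mem_Ici] at hj
        simpa using hc j hj
      · exact fun _ _ _ _ hh => g.injective hh
    have h1 : i.val < k := i.isLt
    rw [Fin.card_Ici, Fin.card_Ioi] at hcard
    omega
  exact le_trans (ha hij) (le_trans (h j) (hb hgj))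

open scoped Classical in
/-- Let `x ≼ y` be weakly increasing tuples in `[n]^k` with `xᵢ ≤ yᵢ` for all `i`, and
let `w = (Σ_{i=x₁}^{y₁} eᵢ) ⊗ … ⊗ (Σ_{i=x_k}^{y_k} eᵢ)`. Then the support of the
symmetrization `P_{1_{S_k}}(w)` (in the basis `{P_{1_{S_k}}(e_z) : z` weakly
increasing`}`, i.e. the weakly increasing `z` with `(P_{1_{S_k}} w)(z) ≠ 0`) is
exactly the interval `[x,y] = {z : x ≼ z ≼ y}`, where `z ≼ z' ↔ z ≤ g(z')`
componentwise for some `g ∈ S_k`. -/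
theorem stmt17 (k n : ℕ) (x y : Fin k → Fin n)
    (hx : Monotone x) (hy : Monotone y) (hxy : ∀ i, x i ≤ y i)
    (w : (Fin k → Fin n) → ℂ)
    (hw : w = fun z => ∏ i, (if x i ≤ z i ∧ z i ≤ y i then (1 : ℂ) else 0))
    (Pw : (Fin k → Fin n) → ℂ)
    (hPw : Pw = fun u => (k.factorial : ℂ)⁻¹ *
      ∑ g : Equiv.Perm (Fin k), w (fun i => u (g i))) :
    ∀ z : Fin k → Fin n, Monotone z →
      (Pw z ≠ 0 ↔
        ((∃ g : Equiv.Perm (Fin k), ∀ i, x i ≤ z (g i)) ∧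
         (∃ g : Equiv.Perm (Fin k), ∀ i, z i ≤ y (g i)))) := by
  intro z hz
  subst hw hPw
  have key : ∀ u : Fin k → Fin n,
      (∏ i, (if x i ≤ u i ∧ u i ≤ y i then (1 : ℂ) else 0))
      = if (∀ i, x i ≤ u i ∧ u i ≤ y i) then (1 : ℂ) else 0 := by
    intro u
    rw [Finset.prod_boole]
    simp
  simp only [key]
  rw [Finset.sum_boole]
  have hfac : ((k.factorial : ℂ))⁻¹ ≠ 0 := by
    simp [Nat.factorial_ne_zero]
  rw [mul_ne_zero_iff]
  constructor
  · rintro ⟨-, hcard⟩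
    have : ∃ g : Equiv.Perm (Fin k), ∀ i, x i ≤ z (g i) ∧ z (g i) ≤ y i := by
      have := hcard
      rw [Nat.cast_ne_zero, Finset.card_ne_zero] at this
      obtain ⟨g, hg⟩ := this
      simp only [Finset.mem_filter] at hg
      exact ⟨g, hg.2⟩
    obtain ⟨g, hg⟩ := this
    refine ⟨⟨g, fun i => (hg i).1⟩, ⟨g⁻¹, fun i => ?_⟩⟩
    have := (hg (g⁻¹ i)).2
    simpa using this
  · rintro ⟨⟨g, hg⟩, ⟨g', hg'⟩⟩
    refine ⟨hfac, ?_⟩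
    have hxz : ∀ i, x i ≤ z i := aux17 hx hz g hg
    have hzy : ∀ i, z i ≤ y i := aux17 hz hy g' hg'
    rw [Nat.cast_ne_zero, Finset.card_ne_zero]
    refine ⟨1, ?_⟩
    simp only [Finset.mem_filter, Finset.mem_univ, true_and]
    exact fun i => ⟨hxz i, hzy i⟩
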